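/- Let v₁*, v₂* and the rigid displacements ψ₁, ..., ψ_{d(d+1)/2} be as in the perfect-bonding setting, and define the Gram-type matrix D* with entries D*_{αβ} = ∫_{Ω*} ⟨C^0 e(v₁^{*α} + v₂^{*α}), e(v₁^{*β} + v₂^{*β})⟩ dx. If (i) the C^0-energy pairing is coercive on symmetric gradients, (ii) any field w with e(w) ≡ 0 on the connected open set Ω* is a rigid displacement, (iii) the ψ_α are linearly independent, and (iv) Σ_α ξ_α(v₁^{*α} + v₂^{*α}) vanishes on ∂D and equals Σ_α ξ_α ψ_α on ∂D₁*, and no nonzero rigid displacement vanishes on ∂D (which contains d affinely spanning points), then D* is symmetric positive definite; in particular det D* > 0. -/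

import Mathlib

/-- Abstract positive-definiteness of the Gram-type matrix D*_{αβ} = B(v_α, v_β) built from
the energy pairing B, where B w w = 0 forces w rigid, rigid fields vanishing on ∂D are zero
(trace T), the v_α vanish on ∂D and agree with the ψ_α on ∂D₁* (trace T₁), and the boundary
values T₁(ψ_α) are linearly independent. -/
theorem stmt16 (d : ℕ) (hd : 2 ≤ d)
    {W W' : Type} [AddCommGroup W] [Module ℝ W] [AddCommGroup W'] [Module ℝ W']
    (B : W →ₗ[ℝ] W →ₗ[ℝ] ℝ)
    (hsymm : ∀ u v, B u v = B v u)
    (hpos : ∀ w, 0 ≤ B w w)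
    (Rig : Submodule ℝ W)
    (hker : ∀ w, B w w = 0 → w ∈ Rig)
    (T T₁ : W →ₗ[ℝ] W')
    (ψ v : Fin (d * (d + 1) / 2) → W)
    (hψmem : ∀ α, ψ α ∈ Rig)
    (hTv : ∀ α, T (v α) = 0)
    (hT₁v : ∀ α, T₁ (v α) = T₁ (ψ α))
    (hRigT : ∀ r ∈ Rig, T r = 0 → r = 0)
    (hindep : LinearIndependent ℝ (fun α => T₁ (ψ α))) :
    (Matrix.of fun α β => B (v α) (v β)).PosDef ∧
    0 < (Matrix.of fun α β => B (v α) (v β)).det := by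
  classical
  set M : Matrix (Fin (d * (d + 1) / 2)) (Fin (d * (d + 1) / 2)) ℝ :=
    Matrix.of fun α β => B (v α) (v β) with hM
  have key : ∀ x : Fin (d * (d + 1) / 2) → ℝ,
      dotProduct x (M.mulVec x) = B (∑ i, x i • v i) (∑ j, x j • v j) := by
    intro x
    simp only [dotProduct, Matrix.mulVec, map_sum, map_smul, LinearMap.sum_apply,
      LinearMap.smul_apply, smul_eq_mul, Finset.mul_sum, hM, Matrix.of_apply]
    rw [Finset.sum_comm]
    congr 1; ext j; congr 1; ext i; ring
  have hpd : M.PosDef := by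
    rw [Matrix.posDef_iff_dotProduct_mulVec]
    constructor
    · ext i j
      simp [hM, Matrix.IsHermitian, hsymm (v i) (v j)]
    · intro x hx
      have hne : (∑ i, x i • v i) ≠ 0 → True := fun _ => trivial
      rw [show (star x) = x by ext i; simp, key x]
      rcases lt_or_eq_of_le (hpos (∑ i, x i • v i)) with h | h
      · exact h
      · exfalso
        set w := ∑ i, x i • v i with hw
        have hrig : w ∈ Rig := hker w h.symm
        have hTw : T w = 0 := by
          simp [hw, map_sum, map_smul, hTv]
        have hw0 : w = 0 := hRigT w hrig hTw
        have hT₁w : (∑ i, x i • T₁ (ψ i)) = 0 := by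
          have : T₁ w = 0 := by rw [hw0]; simp
          simpa [hw, map_sum, map_smul, hT₁v] using this
        have := linearIndependent_iff'.mp hindep Finset.univ x (by simpa using hT₁w)
        exact hx (funext fun i => this i (Finset.mem_univ i))
  exact ⟨hpd, hpd.det_pos⟩
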